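/- Let S be a nonempty family of sequences in a group G such that each sequence u ∈ S converges to the identity in some Hausdorff group topology on G (i.e., each u is a T-sequence, with finest such topology τ_u). Then there exists a Hausdorff group topology on G in which every sequence of S converges to the identity if and only if the infimum (in the lattice of group topologies on G) of the topologies τ_u over u ∈ S is Hausdorff; and in that case, this infimum is the finest Hausdorff group topology in which all sequences of S converge to the identity. -/

import Mathlib

open Filter Topology Pointwise

/-- `u` converges to the identity in the group topology `t`. -/
def TendstoOne {G : Type*} [Group G] (t : GroupTopology G) (u : ℕ → G) : Prop :=
  Filter.Tendsto u Filter.atTop (@nhds G t.toTopologicalSpace 1)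

/-- The group topology `t` is Hausdorff. -/
def IsHausdorffGT {G : Type*} [Group G] (t : GroupTopology G) : Prop :=
  @T2Space G t.toTopologicalSpace

/-- `S` is a `T_s`-set of sequences: some Hausdorff group topology makes every
sequence of `S` converge to the identity. -/
def IsTsSet {G : Type*} [Group G] (S : Set (ℕ → G)) : Prop :=
  ∃ t : GroupTopology G, IsHausdorffGT t ∧ ∀ u ∈ S, TendstoOne t u

/-- `τ` is the finest Hausdorff group topology on `G` in which every sequence of `S`
converges to the identity (recall that in Mathlib's order on topologies, finer = smaller). -/
def IsTauS {G : Type*} [Group G] (S : Set (ℕ → G)) (τ : GroupTopology G) : Prop :=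
  IsHausdorffGT τ ∧ (∀ u ∈ S, TendstoOne τ u) ∧
    ∀ t : GroupTopology G, IsHausdorffGT t → (∀ u ∈ S, TendstoOne t u) → τ ≤ t

/-- The given topological-group structure on `G`, as a term of `GroupTopology G`. -/
def ambientGT (G : Type*) [Group G] [τ : TopologicalSpace G] [h : IsTopologicalGroup G] :
    GroupTopology G := ⟨τ, h⟩

/-- The set of all sequences converging to the identity in a group topology. -/
def SeqConvOne {G : Type*} [Group G] (t : GroupTopology G) : Set (ℕ → G) :=
  {u | TendstoOne t u}

/-- `(G, τ)` is an `s`-group: its topology is the finest Hausdorff group topology in which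
every member of some `T_s`-set of sequences converges to the identity. -/
def IsSGroup (G : Type*) [Group G] [TopologicalSpace G] [IsTopologicalGroup G] [T2Space G] :
    Prop :=
  ∃ S : Set (ℕ → G), IsTauS S (ambientGT G)

private lemma tendstoOne_mono {G : Type*} [Group G] {t t' : GroupTopology G} (h : t ≤ t')
    {u : ℕ → G} (hu : TendstoOne t u) : TendstoOne t' u :=
  hu.mono_right (nhds_mono (GroupTopology.toTopologicalSpace_le.2 h))

/-- Let `S` be a nonempty family of `T`-sequences in `G`, and for each `u ∈ S`
let `t u` be the finest Hausdorff group topology in which `u → 1` (i.e. `τ_u`).  Then `S` is a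
`T_s`-set iff the infimum of the `τ_u` (in the lattice of group topologies, ordered by
inclusion of open sets; in Mathlib's order on `GroupTopology`, where finer = smaller, this
infimum is `⨆ u ∈ S, t u`) is Hausdorff; and in that case this infimum is the finest Hausdorff
group topology in which every sequence of `S` converges to the identity. -/
theorem stmt2 {G : Type*} [Group G] (S : Set (ℕ → G)) (hS : S.Nonempty)
    (t : (ℕ → G) → GroupTopology G) (ht : ∀ u ∈ S, IsTauS {u} (t u)) :
    (IsTsSet S ↔ IsHausdorffGT (⨆ u ∈ S, t u)) ∧
      (IsTsSet S → IsTauS S (⨆ u ∈ S, t u)) := by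
  set T := ⨆ u ∈ S, t u with hT
  have hconv : ∀ u ∈ S, TendstoOne T u := by
    intro u hu
    exact tendstoOne_mono (le_iSup₂ (f := fun u _ => t u) u hu)
      ((ht u hu).2.1 u rfl)
  have hle : ∀ t' : GroupTopology G, IsHausdorffGT t' → (∀ u ∈ S, TendstoOne t' u) →
      T ≤ t' := by
    intro t' h2 hconv'
    exact iSup₂_le fun u hu => (ht u hu).2.2 t' h2 (by intro v hv; rw [Set.mem_singleton_iff] at hv; subst hv; exact hconv' v hu)
  have key : IsTsSet S → IsHausdorffGT T := by
    rintro ⟨t', h2, hconv'⟩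
    exact t2Space_antitone (GroupTopology.toTopologicalSpace_le.2 (hle t' h2 hconv')) h2
  refine ⟨⟨key, fun h => ⟨T, h, hconv⟩⟩, fun h => ⟨key h, hconv, hle⟩⟩
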